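/- For every t ∈ [−1,1], the preimage f⁻¹({t}) under Kuratowski's function is uncountable. -/

import Mathlib

open Set Topology

/-- The Cantor space `2^ℕ`, with coordinates indexed by the positive integers. -/
abbrev Cant : Type := ℕ+ → Bool

/-- The support of a point of the Cantor space, as a set of (positive) natural numbers. -/
def ksupp (x : Cant) : Set ℕ := {i | ∃ h : 0 < i, x ⟨i, h⟩ = true}

open scoped Classical in
/-- Kuratowski's function `f(x) = Σ_j (−1)^{c_x(j)} 2^{−j}`, where `c_x` enumerates the
support of `x` in increasing order; here the summation index `j : ℕ` is the 0-based
version of the paper's 1-based position index, so the weight is `2^{−(j+1)}`. -/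
noncomputable def kf (x : Cant) : ℝ :=
  ∑' j : ℕ, if (ksupp x).Infinite ∨ j < (ksupp x).ncard then
    (-1 : ℝ) ^ (Nat.nth (· ∈ ksupp x) j) * (2 : ℝ) ^ (-(j + 1 : ℤ)) else 0

/-! ### Auxiliary material -/

lemma nth_range_strictMono (f : ℕ → ℕ) (hf : StrictMono f) (n : ℕ) :
    Nat.nth (· ∈ Set.range f) n = f n := by
  have hinf : (setOf (· ∈ Set.range f)).Infinite := by
    exact Set.infinite_range_of_injective hf.injective
  have hrange : Set.range (Nat.nth (· ∈ Set.range f)) = Set.range f := by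
    exact Nat.range_nth_of_infinite hinf
  set g := Nat.nth (· ∈ Set.range f) with hg
  have hgm : StrictMono g := Nat.nth_strictMono hinf
  induction n using Nat.strong_induction_on with
  | _ n ih =>
    obtain ⟨m, hm⟩ : f n ∈ Set.range g := hrange ▸ Set.mem_range_self n
    obtain ⟨m', hm'⟩ : g n ∈ Set.range f := hrange ▸ Set.mem_range_self n
    have hnm : n ≤ m := by
      by_contra hlt
      push_neg at hlt
      have := ih m hlt
      exact absurd (hf.injective (this ▸ hm).symm) (Nat.ne_of_lt hlt).symm
    have hnm' : n ≤ m' := by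
      by_contra hlt
      push_neg at hlt
      rw [← ih m' hlt] at hm'
      exact absurd (hgm.injective hm') (Nat.ne_of_lt hlt)
    exact le_antisymm (hm ▸ hgm.monotone hnm) (hm' ▸ hf.monotone hnm')

open scoped Classical in
/-- Greedy partial sums for the binary expansion of `r`. -/
noncomputable def gsum (r : ℝ) : ℕ → ℝ
  | 0 => 0
  | n+1 => gsum r n + if gsum r n + ((2:ℝ)^(n+1))⁻¹ ≤ r then ((2:ℝ)^(n+1))⁻¹ else 0

open scoped Classical in
/-- Greedy binary digits of `r`. -/
noncomputable def gbit (r : ℝ) (n : ℕ) : Bool := decide (gsum r n + ((2:ℝ)^(n+1))⁻¹ ≤ r)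

lemma gsum_succ (r : ℝ) (n : ℕ) :
    gsum r (n+1) = gsum r n + (if gbit r n then (1:ℝ) else 0) * ((2:ℝ)^(n+1))⁻¹ := by
  rw [gsum, gbit]
  by_cases h : gsum r n + ((2:ℝ)^(n+1))⁻¹ ≤ r <;> simp [h]

lemma gsum_inv (r : ℝ) (h0 : 0 ≤ r) (h1 : r ≤ 1) (n : ℕ) :
    gsum r n ≤ r ∧ r ≤ gsum r n + ((2:ℝ)^n)⁻¹ := by
  induction n with
  | zero => simpa [gsum] using ⟨h0, h1⟩
  | succ n ih =>
    rw [gsum_succ]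
    by_cases h : gsum r n + ((2:ℝ)^(n+1))⁻¹ ≤ r
    · have hb' : gbit r n = true := by simp [gbit, h]
      rw [hb']
      have he : ((2:ℝ)^n)⁻¹ = ((2:ℝ)^(n+1))⁻¹ + ((2:ℝ)^(n+1))⁻¹ := by
        field_simp; ring
      constructor
      · simpa using h
      · simp only [if_pos, one_mul]
        have := ih.2
        rw [he] at this
        linarith
    · have hb' : gbit r n = false := by simp [gbit, h]
      rw [hb']
      push_neg at h
      constructor
      · simpa using ih.1
      · simp only [Bool.false_eq_true, if_false, zero_mul, add_zero]
        linarith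

lemma exists_digits (r : ℝ) (h0 : 0 ≤ r) (h1 : r ≤ 1) :
    ∃ b : ℕ → Bool, HasSum (fun j : ℕ => (if b j then (1:ℝ) else 0) * ((2:ℝ)^(j+1))⁻¹) r := by
  refine ⟨gbit r, ?_⟩
  set f : ℕ → ℝ := fun j => (if gbit r j then (1:ℝ) else 0) * ((2:ℝ)^(j+1))⁻¹ with hf
  have hpart : ∀ n, ∑ j ∈ Finset.range n, f j = gsum r n := by
    intro n
    induction n with
    | zero => simp [gsum]
    | succ n ih => rw [Finset.sum_range_succ, ih, ← gsum_succ]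
  have hsum : Summable f := by
    apply Summable.of_nonneg_of_le (fun j => ?_) (fun j => ?_)
      ((summable_geometric_two).comp_injective (add_left_injective 1))
    · show (0:ℝ) ≤ (if gbit r j then (1:ℝ) else 0) * ((2:ℝ)^(j+1))⁻¹
      by_cases h : gbit r j <;> simp [h]
    · show (if gbit r j then (1:ℝ) else 0) * ((2:ℝ)^(j+1))⁻¹ ≤ (1/2:ℝ)^(j+1)
      have hwe : ((2:ℝ)^(j+1))⁻¹ = (1/2:ℝ)^(j+1) := by simp [inv_pow, one_div]
      rw [hwe]
      by_cases h : gbit r j <;> simp [h] <;> positivity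
  have hlim : Filter.Tendsto (gsum r) Filter.atTop (nhds r) := by
    have h2 : Filter.Tendsto (fun n : ℕ => r - ((2:ℝ)^n)⁻¹) Filter.atTop (nhds r) := by
      have : Filter.Tendsto (fun n : ℕ => ((2:ℝ)^n)⁻¹) Filter.atTop (nhds 0) := by
        simpa [inv_pow, one_div] using tendsto_pow_atTop_nhds_zero_of_lt_one
          (by norm_num : (0:ℝ) ≤ 1/2) (by norm_num : (1/2:ℝ) < 1)
      simpa using (tendsto_const_nhds (x := r)).sub this
    exact tendsto_of_tendsto_of_tendsto_of_le_of_le h2 tendsto_const_nhds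
      (fun n => by linarith [(gsum_inv r h0 h1 n).2]) (fun n => (gsum_inv r h0 h1 n).1)
  have h3 : Filter.Tendsto (fun n => ∑ j ∈ Finset.range n, f j) Filter.atTop (nhds (∑' j, f j)) :=
    hsum.hasSum.tendsto_sum_nat
  rw [funext hpart] at h3
  exact (tendsto_nhds_unique h3 hlim) ▸ hsum.hasSum

/-- Encoding of a binary parameter `a` as a strictly increasing sequence with
prescribed parities (even iff `b n = true`). -/
def kseq (b : ℕ → Bool) (a : ℕ → Bool) (n : ℕ) : ℕ :=
  (if b n then 0 else 1) + 2*(n+1) + 4 * ∑ k ∈ Finset.range (n+1), (a k).toNat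

lemma kseq_strictMono (b a : ℕ → Bool) : StrictMono (kseq b a) := by
  apply strictMono_nat_of_lt_succ
  intro n
  unfold kseq
  have h1 : (if b n then 0 else 1) ≤ 1 := by split <;> omega
  have h2 : ∑ k ∈ Finset.range (n+1), (a k).toNat
      ≤ ∑ k ∈ Finset.range (n+1+1), (a k).toNat :=
    Finset.sum_le_sum_of_subset (by simp [Finset.range_subset]; intro x hx; omega)
  omega

lemma kseq_pos (b a : ℕ → Bool) (n : ℕ) : 0 < kseq b a n := by unfold kseq; omega

lemma kseq_injective (b : ℕ → Bool) : Function.Injective (kseq b) := by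
  intro a a' h
  have hsum : ∀ n, ∑ k ∈ Finset.range (n+1), (a k).toNat
      = ∑ k ∈ Finset.range (n+1), (a' k).toNat := by
    intro n
    have := congrFun h n
    unfold kseq at this
    omega
  funext n
  have h2 : (a n).toNat = (a' n).toNat := by
    cases n with
    | zero => simpa using hsum 0
    | succ m =>
      have h3 := hsum m
      have h4 := hsum (m+1)
      rw [Finset.sum_range_succ, Finset.sum_range_succ (n := m+1)] at h4
      omega
  cases ha : a n <;> cases ha' : a' n <;> simp_all

lemma kseq_neg_one_pow (b a : ℕ → Bool) (n : ℕ) :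
    (-1 : ℝ) ^ (kseq b a n) = if b n then (1:ℝ) else -1 := by
  have : kseq b a n
      = (if b n then 0 else 1) + 2 * ((n+1) + 2 * ∑ k ∈ Finset.range (n+1), (a k).toNat) := by
    unfold kseq; ring
  rw [this, pow_add, pow_mul]
  norm_num

open scoped Classical in
/-- The point of the Cantor space with support `range (kseq b a)`. -/
noncomputable def kpoint (b a : ℕ → Bool) : Cant := fun i => decide (∃ n, kseq b a n = (i:ℕ))

lemma ksupp_kpoint (b a : ℕ → Bool) : ksupp (kpoint b a) = Set.range (kseq b a) := by
  ext i
  constructor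
  · rintro ⟨hi, hx⟩
    exact @of_decide_eq_true _ (Classical.dec _) hx
  · rintro ⟨n, rfl⟩
    refine ⟨kseq_pos b a n, ?_⟩
    simp only [kpoint, decide_eq_true_eq]
    exact ⟨n, rfl⟩

lemma kpoint_injective (b : ℕ → Bool) : Function.Injective (kpoint b) := by
  intro a a' h
  have hr : Set.range (kseq b a) = Set.range (kseq b a') := by
    rw [← ksupp_kpoint, ← ksupp_kpoint, h]
  apply kseq_injective b
  funext n
  rw [← nth_range_strictMono _ (kseq_strictMono b a) n,
    ← nth_range_strictMono _ (kseq_strictMono b a') n]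
  simp only [hr]

lemma kf_kpoint (b a : ℕ → Bool) :
    kf (kpoint b a)
      = ∑' j : ℕ, (if b j then (1:ℝ) else -1) * ((2:ℝ)^(j+1))⁻¹ := by
  have hks := ksupp_kpoint b a
  have hinf : (ksupp (kpoint b a)).Infinite := by
    rw [hks]
    exact Set.infinite_range_of_injective (kseq_strictMono b a).injective
  unfold kf
  apply tsum_congr
  intro j
  rw [if_pos (Or.inl hinf)]
  have hnth : Nat.nth (· ∈ ksupp (kpoint b a)) j = kseq b a j := by
    rw [show (· ∈ ksupp (kpoint b a)) = (· ∈ Set.range (kseq b a)) by rw [hks]]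
    exact nth_range_strictMono _ (kseq_strictMono b a) j
  rw [hnth, kseq_neg_one_pow]
  have hz : (2:ℝ) ^ (-(j + 1 : ℤ)) = ((2:ℝ)^(j+1))⁻¹ := by
    rw [zpow_neg]
    norm_cast
  rw [hz]

lemma hasSum_weights : HasSum (fun j : ℕ => ((2:ℝ)^(j+1))⁻¹) 1 := by
  have h := hasSum_geometric_two.mul_left (1/2 : ℝ)
  norm_num at h
  apply h.congr_fun
  intro j
  simp [pow_succ, mul_inv, one_div, mul_comm]

/-- For every `t ∈ [−1,1]` the preimage `f⁻¹({t})` under Kuratowski's function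
is uncountable. -/
theorem kf_preimage_uncountable (t : ℝ) (ht : t ∈ Icc (-1 : ℝ) 1) :
    ¬ (kf ⁻¹' {t}).Countable := by
  intro hcount
  -- binary digits of (t+1)/2
  obtain ⟨b, hb⟩ := exists_digits ((t+1)/2) (by linarith [ht.1]) (by linarith [ht.2])
  -- every kpoint b a lies in the fiber
  have hmem : ∀ a : ℕ → Bool, kpoint b a ∈ kf ⁻¹' {t} := by
    intro a
    have hsum : HasSum (fun j : ℕ => (if b j then (1:ℝ) else -1) * ((2:ℝ)^(j+1))⁻¹) t := by
      have h2 := (hb.mul_left 2).sub hasSum_weights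
      have he : (fun j : ℕ => 2 * ((if b j then (1:ℝ) else 0) * ((2:ℝ)^(j+1))⁻¹)
          - ((2:ℝ)^(j+1))⁻¹)
          = fun j : ℕ => (if b j then (1:ℝ) else -1) * ((2:ℝ)^(j+1))⁻¹ := by
        funext j
        by_cases h : b j <;> simp [h] <;> ring
      rw [he] at h2
      have : 2 * ((t+1)/2) - 1 = t := by ring
      rwa [this] at h2
    simp only [Set.mem_preimage, Set.mem_singleton_iff]
    rw [kf_kpoint b a]
    exact hsum.tsum_eq
  -- countability contradiction via Cantor's theorem
  have hrange : (Set.range (kpoint b)).Countable :=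
    hcount.mono (Set.range_subset_iff.mpr hmem)
  have hc : Countable ↑(Set.range (kpoint b)) := hrange.to_subtype
  have hcant : Countable (ℕ → Bool) :=
    Countable.of_equiv _ (Equiv.ofInjective _ (kpoint_injective b)).symm
  obtain ⟨g, hg⟩ := (countable_iff_exists_injective _).mp hcant
  have : Function.Injective (fun s : Set ℕ =>
      g (fun n => @ite Bool (n ∈ s) (Classical.dec _) true false)) := by
    intro s u hsu
    have h2 := hg hsu
    ext n
    have h3 := congrFun h2 n
    constructor
    · intro hs
      by_contra hu
      rw [if_pos hs, if_neg hu] at h3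
      exact Bool.noConfusion h3
    · intro hu
      by_contra hs
      rw [if_neg hs, if_pos hu] at h3
      exact Bool.noConfusion h3
  exact Function.cantor_injective _ this
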